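/- For x ∈ ℝ define the Chang–Cooper weight δ(x) = 1/x − 1/(eˣ − 1) for x ≠ 0. Then for every x > 0 one has 0 < δ(x) < 1/2, and for every x < 0 one has 1/2 < δ(x) < 1; in particular δ(x) ∈ (0,1) for all x ≠ 0. -/

import Mathlib

private lemma cc_key (x : ℝ) (hx : 0 < x) : (2 - x) * Real.exp x < 2 + x := by
  have h : ∀ y ∈ Set.Ici (0:ℝ), HasDerivAt (fun t => 2 + t - (2 - t) * Real.exp t)
      (1 - (1 - y) * Real.exp y) y := by
    intro y _
    have h1 : HasDerivAt (fun t : ℝ => 2 + t) 1 y := by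
      simpa using (hasDerivAt_id y).const_add 2
    have h2 : HasDerivAt (fun t : ℝ => (2 - t) * Real.exp t)
        ((-1) * Real.exp y + (2 - y) * Real.exp y) y := by
      exact (((hasDerivAt_id y).const_sub 2)).mul (Real.hasDerivAt_exp y)
    exact (h1.sub h2).congr_deriv (by ring)
  have hmono : StrictMonoOn (fun t => 2 + t - (2 - t) * Real.exp t) (Set.Ici 0) := by
    apply strictMonoOn_of_deriv_pos (convex_Ici 0)
    · exact Continuous.continuousOn (by continuity)
    · intro y hy
      rw [interior_Ici] at hy
      have hy' : (0:ℝ) < y := hy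
      rw [(h y (Set.mem_Ici.mpr (le_of_lt hy'))).deriv]
      have : (1 - y) * Real.exp y < 1 := by
        have h3 : 1 - y < Real.exp (-y) := by
          have := Real.add_one_lt_exp (x := -y) (neg_ne_zero.mpr (ne_of_gt hy'))
          linarith
        have := Real.exp_pos y
        calc (1 - y) * Real.exp y < Real.exp (-y) * Real.exp y := by
              exact mul_lt_mul_of_pos_right h3 this
          _ = 1 := by rw [← Real.exp_add]; simp
      linarith
  have := hmono (Set.self_mem_Ici) (Set.mem_Ici.mpr hx.le) hx
  simp at this
  linarith

private lemma cc_pos (x : ℝ) (hx : 0 < x) :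
    0 < 1 / x - 1 / (Real.exp x - 1) ∧ 1 / x - 1 / (Real.exp x - 1) < 1 / 2 := by
  have hE : 0 < Real.exp x - 1 := by
    have := Real.add_one_lt_exp (ne_of_gt hx)
    linarith
  have hlt : x < Real.exp x - 1 := by
    have := Real.add_one_lt_exp (ne_of_gt hx)
    linarith
  constructor
  · have := one_div_lt_one_div_of_lt hx hlt
    linarith
  · rw [div_sub_div _ _ (ne_of_gt hx) (ne_of_gt hE), div_lt_div_iff₀ (by positivity) two_pos]
    nlinarith [cc_key x hx]

private lemma cc_symm (x : ℝ) (hx : x ≠ 0) :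
    1 / x - 1 / (Real.exp x - 1) = 1 - (1 / (-x) - 1 / (Real.exp (-x) - 1)) := by
  have hE : Real.exp x - 1 ≠ 0 := by
    rcases lt_or_gt_of_ne hx with h | h
    · have := Real.add_one_lt_exp (ne_of_lt h)
      have h2 : Real.exp x < 1 := by
        calc Real.exp x < Real.exp 0 := Real.exp_lt_exp.mpr h
          _ = 1 := Real.exp_zero
      linarith
    · have := Real.add_one_lt_exp (ne_of_gt h)
      intro hc; linarith
  have hE' : Real.exp (-x) - 1 ≠ 0 := by
    rw [Real.exp_neg]
    intro hc
    apply hE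
    have hp := Real.exp_pos x
    field_simp at hc
    linarith
  rw [Real.exp_neg] at hE' ⊢
  have hp := (Real.exp_pos x).ne'
  have h1 : 1 - Real.exp x ≠ 0 := fun hc => hE (by linarith)
  rw [inv_eq_one_div, div_sub' hp]
  field_simp [hx, h1]
  ring

/-- Bounds on the classical Chang–Cooper weight δ(x) = 1/x − 1/(eˣ − 1). -/
theorem stmt3 (δ : ℝ → ℝ) (hδ : ∀ x : ℝ, x ≠ 0 → δ x = 1 / x - 1 / (Real.exp x - 1)) :
    (∀ x : ℝ, 0 < x → 0 < δ x ∧ δ x < 1 / 2) ∧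
    (∀ x : ℝ, x < 0 → 1 / 2 < δ x ∧ δ x < 1) ∧
    (∀ x : ℝ, x ≠ 0 → δ x ∈ Set.Ioo (0 : ℝ) 1) := by
  have hpos : ∀ x : ℝ, 0 < x → 0 < δ x ∧ δ x < 1 / 2 := by
    intro x hx
    rw [hδ x (ne_of_gt hx)]
    exact cc_pos x hx
  have hneg : ∀ x : ℝ, x < 0 → 1 / 2 < δ x ∧ δ x < 1 := by
    intro x hx
    rw [hδ x (ne_of_lt hx), cc_symm x (ne_of_lt hx)]
    have := cc_pos (-x) (by linarith)
    constructor <;> linarith [this.1, this.2]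
  refine ⟨hpos, hneg, ?_⟩
  intro x hx
  rcases lt_or_gt_of_ne hx with h | h
  · exact ⟨by linarith [(hneg x h).1], (hneg x h).2⟩
  · exact ⟨(hpos x h).1, by linarith [(hpos x h).2]⟩
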